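/- Coprime factorization of λ(N): if p, q are distinct odd primes, there exist coprime positive integers p₂, q₂ with p₂·q₂ = lcm(p−1, q−1), such that (p−1)/gcd(p−1,q−1) divides p₂ and (q−1)/gcd(p−1,q−1) divides q₂. -/

import Mathlib

open Nat

lemma coprime_div_gcd_factorizationLCMRight (a b : ℕ) (ha : a ≠ 0) (hb : b ≠ 0) :
    Nat.Coprime (a / Nat.gcd a b) (Nat.factorizationLCMRight a b) := by
  rw [Nat.factorizationLCMRight]
  refine Nat.coprime_prod_right_iff.mpr fun p hp ↦ ?_
  dsimp only
  split_ifs with h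
  · exact Nat.coprime_one_right _
  push_neg at h
  refine Nat.Coprime.pow_right _ ?_
  rw [Nat.coprime_comm]
  refine (Nat.prime_of_mem_primeFactors hp).coprime_iff_not_dvd.mpr fun hdvd ↦ ?_
  have hne : a / Nat.gcd a b ≠ 0 :=
    Nat.div_ne_zero_iff.mpr ⟨Nat.gcd_ne_zero_left ha, Nat.le_of_dvd (Nat.pos_of_ne_zero ha) (Nat.gcd_dvd_left a b)⟩
  have := (Nat.Prime.dvd_iff_one_le_factorization (Nat.prime_of_mem_primeFactors hp) hne).mp hdvd
  rw [Nat.factorization_div (Nat.gcd_dvd_left a b), Nat.factorization_gcd ha hb] at this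
  simp only [Finsupp.tsub_apply, Finsupp.inf_apply] at this
  omega

lemma coprime_div_gcd_factorizationLCMLeft (a b : ℕ) (ha : a ≠ 0) (hb : b ≠ 0) :
    Nat.Coprime (b / Nat.gcd a b) (Nat.factorizationLCMLeft a b) := by
  rw [Nat.factorizationLCMLeft]
  refine Nat.coprime_prod_right_iff.mpr fun p hp ↦ ?_
  dsimp only
  split_ifs with h
  swap
  · exact Nat.coprime_one_right _
  refine Nat.Coprime.pow_right _ ?_
  rw [Nat.coprime_comm]
  refine (Nat.prime_of_mem_primeFactors hp).coprime_iff_not_dvd.mpr fun hdvd ↦ ?_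
  have hne : b / Nat.gcd a b ≠ 0 :=
    Nat.div_ne_zero_iff.mpr ⟨Nat.gcd_ne_zero_left ha, Nat.le_of_dvd (Nat.pos_of_ne_zero hb) (Nat.gcd_dvd_right a b)⟩
  have := (Nat.Prime.dvd_iff_one_le_factorization (Nat.prime_of_mem_primeFactors hp) hne).mp hdvd
  rw [Nat.factorization_div (Nat.gcd_dvd_right a b), Nat.factorization_gcd ha hb] at this
  simp only [Finsupp.tsub_apply, Finsupp.inf_apply] at this
  omega

theorem coprime_factorization_of_lambda (p q : ℕ) (hp : p.Prime) (hq : q.Prime)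
    (hpq : p ≠ q) (hp2 : p ≠ 2) (hq2 : q ≠ 2) :
    ∃ p₂ q₂ : ℕ, 0 < p₂ ∧ 0 < q₂ ∧ Nat.Coprime p₂ q₂ ∧
      p₂ * q₂ = Nat.lcm (p - 1) (q - 1) ∧
      ((p - 1) / Nat.gcd (p - 1) (q - 1)) ∣ p₂ ∧
      ((q - 1) / Nat.gcd (p - 1) (q - 1)) ∣ q₂ := by
  set a := p - 1 with hadef
  set b := q - 1 with hbdef
  have ha : a ≠ 0 := by have := hp.two_le; omega
  have hb : b ≠ 0 := by have := hq.two_le; omega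
  refine ⟨Nat.factorizationLCMLeft a b, Nat.factorizationLCMRight a b,
    Nat.factorizationLCMLeft_pos a b, Nat.factorizationLCMRight_pos a b,
    Nat.coprime_factorizationLCMLeft_factorizationLCMRight a b,
    Nat.factorizationLCMLeft_mul_factorizationLCMRight ha hb, ?_, ?_⟩
  · have hdvd : (a / Nat.gcd a b) ∣ Nat.factorizationLCMLeft a b * Nat.factorizationLCMRight a b := by
      rw [Nat.factorizationLCMLeft_mul_factorizationLCMRight ha hb]
      exact (Nat.div_dvd_iff_dvd_mul (Nat.gcd_dvd_left a b) (Nat.pos_of_ne_zero (Nat.gcd_ne_zero_left ha))).mpr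
        (by rw [Nat.gcd_mul_lcm]; exact dvd_mul_right a b)
    exact (Nat.Coprime.dvd_of_dvd_mul_right
      (coprime_div_gcd_factorizationLCMRight a b ha hb) hdvd)
  · have hdvd : (b / Nat.gcd a b) ∣ Nat.factorizationLCMLeft a b * Nat.factorizationLCMRight a b := by
      rw [Nat.factorizationLCMLeft_mul_factorizationLCMRight ha hb]
      exact (Nat.div_dvd_iff_dvd_mul (Nat.gcd_dvd_right a b) (Nat.pos_of_ne_zero (Nat.gcd_ne_zero_left ha))).mpr
        (by rw [Nat.gcd_mul_lcm]; exact dvd_mul_left b a)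
    exact (Nat.Coprime.dvd_of_dvd_mul_left
      (coprime_div_gcd_factorizationLCMLeft a b ha hb) hdvd)
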